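/- On a Riemannian Π-manifold, the (0,3)-torsion tensor of the first natural connection satisfies Ṫ(x,y,z) = −(1/2){F(x,φy,z) − F(y,φx,z)} − (1/2)η(z){F(x,φy,ξ) − F(y,φx,ξ)} + η(y)F(x,φz,ξ) − η(x)F(y,φz,ξ). -/
import Mathlib


/-- Algebraic model of a Riemannian Π-manifold: `V` is the module of vector fields
over the commutative ring `C` of (smooth) functions, `g` the metric, `(phi, xi, eta)`
the Π-structure, `d` the directional-derivative action of vector fields on functions,
`nabla` the Levi-Civita connection (torsion-free w.r.t. the bracket `lie` and
metric-compatible), together with the standard identities of the Π-structure. -/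
structure RPM (C : Type*) (V : Type*) [CommRing C] [Algebra ℝ C]
    [AddCommGroup V] [Module C V] where
  g : V →ₗ[C] V →ₗ[C] C
  phi : V →ₗ[C] V
  xi : V
  eta : V →ₗ[C] C
  d : V → C → C
  nabla : V → V → V
  lie : V → V → V
  g_symm : ∀ x y, g x y = g y x
  phi_xi : phi xi = 0
  phi_sq : ∀ x, phi (phi x) = x - eta x • xi
  eta_phi : ∀ x, eta (phi x) = 0
  eta_xi : eta xi = 1
  g_phi_phi : ∀ x y, g (phi x) (phi y) = g x y - eta x * eta y
  g_phi : ∀ x y, g (phi x) y = g x (phi y)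
  g_xi : ∀ x, g x xi = eta x
  d_one : ∀ x, d x 1 = 0
  d_mul : ∀ x f h, d x (f * h) = f * d x h + h * d x f
  nabla_add_left : ∀ x y z, nabla (x + y) z = nabla x z + nabla y z
  nabla_smul_left : ∀ (f : C) (x y : V), nabla (f • x) y = f • nabla x y
  nabla_add_right : ∀ x y z, nabla x (y + z) = nabla x y + nabla x z
  nabla_leibniz : ∀ (x : V) (f : C) (y : V), nabla x (f • y) = d x f • y + f • nabla x y
  torsion_free : ∀ x y, nabla x y - nabla y x = lie x y
  metric_compat : ∀ x y z, d x (g y z) = g (nabla x y) z + g y (nabla x z)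

namespace RPM

variable {C : Type*} {V : Type*} [CommRing C] [Algebra ℝ C] [AddCommGroup V] [Module C V]

/-- The fundamental tensor `F(x,y,z) = g((∇ₓφ)y, z)`. -/
def F (M : RPM C V) (x y z : V) : C :=
  M.g (M.nabla x (M.phi y) - M.phi (M.nabla x y)) z

/-- The constant function 1/2. -/
noncomputable def half (M : RPM C V) : C := algebraMap ℝ C (1 / 2)

/-- The first natural connection
`Ḋₓy = ∇ₓy − (1/2){(∇ₓφ)(φy) − (∇ₓη)(y)·ξ} − η(y)∇ₓξ`, where
`(∇ₓφ)(φy) = ∇ₓ(φ²y) − φ(∇ₓ(φy))` and `(∇ₓη)(y) = g(∇ₓξ, y)`. -/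
noncomputable def D1 (M : RPM C V) (x y : V) : V :=
  M.nabla x y
    - M.half • ((M.nabla x (M.phi (M.phi y)) - M.phi (M.nabla x (M.phi y)))
        - M.g (M.nabla x M.xi) y • M.xi)
    - M.eta y • M.nabla x M.xi

/-- The torsion of the first natural connection. -/
noncomputable def T1 (M : RPM C V) (x y : V) : V := M.D1 x y - M.D1 y x - M.lie x y

/-- The Lee form ω = F(ξ,ξ,·). -/
def omegaF (M : RPM C V) (z : V) : C := M.F M.xi M.xi z

end RPM

open RPM

section Aux
variable {C : Type*} {V : Type*} [CommRing C] [Algebra ℝ C] [AddCommGroup V] [Module C V]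

lemma RPM.half_two (M : RPM C V) : M.half * 2 = 1 := by
  rw [RPM.half, show (2 : C) = algebraMap ℝ C 2 from (map_ofNat _ 2).symm, ← map_mul]
  norm_num

lemma RPM.g_xi_left (M : RPM C V) (w : V) : M.g M.xi w = M.eta w :=
  (M.g_symm _ _).trans (M.g_xi w)

lemma RPM.g_nabla_xi_xi (M : RPM C V) (x : V) : M.g (M.nabla x M.xi) M.xi = 0 := by
  have h := M.metric_compat x M.xi M.xi
  rw [M.g_xi, M.eta_xi, M.d_one, M.g_xi_left, ← M.g_xi] at h
  have h2 : M.g (M.nabla x M.xi) M.xi * 2 = 0 := by linear_combination -h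
  linear_combination M.half * h2 - M.g (M.nabla x M.xi) M.xi * M.half_two

lemma RPM.eta_nabla_xi (M : RPM C V) (x : V) : M.eta (M.nabla x M.xi) = 0 := by
  rw [← M.g_xi]; exact M.g_nabla_xi_xi x

lemma RPM.eta_nabla (M : RPM C V) (x w : V) :
    M.eta (M.nabla x w) = M.d x (M.eta w) - M.g (M.nabla x M.xi) w := by
  have h := M.metric_compat x w M.xi
  rw [M.g_xi] at h
  rw [← M.g_xi (M.nabla x w)]
  linear_combination M.g_symm (M.nabla x M.xi) w - h

lemma RPM.F_phi_xi (M : RPM C V) (x y : V) :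
    M.F x (M.phi y) M.xi = -(M.g (M.nabla x M.xi) y) := by
  have hy : M.nabla x y
      = M.nabla x (M.phi (M.phi y)) + (M.d x (M.eta y) • M.xi + M.eta y • M.nabla x M.xi) := by
    conv_lhs => rw [show y = M.phi (M.phi y) + M.eta y • M.xi by rw [M.phi_sq]; abel]
    rw [M.nabla_add_right, M.nabla_leibniz]
  have he := congrArg M.eta hy
  simp only [map_add, map_smul, smul_eq_mul, M.eta_xi, mul_one, M.eta_nabla_xi, mul_zero,
    add_zero] at he
  have hn := M.eta_nabla x y
  rw [RPM.F, map_sub, LinearMap.sub_apply, M.g_xi, M.g_xi, M.eta_phi]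
  linear_combination hn - he

end Aux


variable {C : Type*} {V : Type*} [CommRing C] [Algebra ℝ C] [AddCommGroup V] [Module C V]

/-- The (0,3)-torsion of the first natural connection satisfies
`Ṫ(x,y,z) = −(1/2){F(x,φy,z) − F(y,φx,z)} − (1/2)η(z){F(x,φy,ξ) − F(y,φx,ξ)}
+ η(y)F(x,φz,ξ) − η(x)F(y,φz,ξ)`. -/
theorem stmt13 (M : RPM C V) :
    ∀ x y z : V,
      M.g (M.T1 x y) z
        = - M.half * (M.F x (M.phi y) z - M.F y (M.phi x) z)
          - M.half * (M.eta z * (M.F x (M.phi y) M.xi - M.F y (M.phi x) M.xi))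
          + M.eta y * M.F x (M.phi z) M.xi - M.eta x * M.F y (M.phi z) M.xi := by
  intro x y z
  have hF := M.F_phi_xi
  simp only [RPM.F, map_sub, LinearMap.sub_apply, M.g_xi] at hF
  simp only [RPM.T1, RPM.D1, ← M.torsion_free, RPM.F, map_sub, map_smul, map_add,
    LinearMap.sub_apply, LinearMap.smul_apply, LinearMap.add_apply, smul_eq_mul,
    M.g_xi, M.g_xi_left]
  linear_combination (M.half * M.eta z) * hF x y - (M.half * M.eta z) * hF y x
    - M.eta y * hF x z + M.eta x * hF y z
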